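/- Let (M,ρ) be a finite pseudometric space and let G = (V,E) be a finite tree joining M in which every vertex of degree 1 belongs to M. Then there exists a generalized minimal parametric filling of type G: a weight function w* : E → ℝ such that (G,w*) is a generalized filling of (M,ρ) and w*(G) ≤ w(G) for every weight function w : E → ℝ making (G,w) a generalized filling of (M,ρ). -/

import Mathlib

open scoped BigOperators

namespace MinFill

variable {V : Type*}

/-- The total weight of a (generalized) weighted graph: the sum of the weights
of its edges. -/
noncomputable def graphWeight (G : SimpleGraph V) (w : Sym2 V → ℝ) : ℝ :=
  ∑ᶠ e ∈ G.edgeSet, w e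

/-- The weight of a walk: the sum of the weights of its edges. -/
def walkWeight {G : SimpleGraph V} (w : Sym2 V → ℝ) {u v : V} (p : G.Walk u v) : ℝ :=
  (p.edges.map w).sum

/-- `dw G w u v` is the minimum over simple paths in `G` from `u` to `v` of the
sum of the weights of their edges. -/
noncomputable def dw (G : SimpleGraph V) (w : Sym2 V → ℝ) (u v : V) : ℝ :=
  sInf {r : ℝ | ∃ p : G.Walk u v, p.IsPath ∧ walkWeight w p = r}

/-- The degree of a vertex: the number of edges incident to it. -/
noncomputable def deg (G : SimpleGraph V) (v : V) : ℕ :=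
  (G.neighborSet v).ncard

/-- `ρ` is a pseudometric on the subset `M`: symmetric, nonnegative, vanishing
on the diagonal and satisfying the triangle inequality. -/
def IsPseudometricOn (M : Set V) (ρ : V → V → ℝ) : Prop :=
  (∀ p ∈ M, ∀ q ∈ M, ρ p q = ρ q p) ∧
  (∀ p ∈ M, ∀ q ∈ M, 0 ≤ ρ p q) ∧
  (∀ p ∈ M, ρ p p = 0) ∧
  (∀ p ∈ M, ∀ q ∈ M, ∀ r ∈ M, ρ p r ≤ ρ p q + ρ q r)

/-- `(G, w)` is a generalized filling of `(M, ρ)` (with `M ⊆ V`): `G` is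
connected (and joins `M`), and for all boundary points `p, q ∈ M` every simple
path in `G` from `p` to `q` has weight at least `ρ p q` (equivalently
`ρ p q ≤ d_w(p, q)`). -/
def IsGenFilling (G : SimpleGraph V) (w : Sym2 V → ℝ) (M : Set V) (ρ : V → V → ℝ) : Prop :=
  G.Connected ∧ ∀ p ∈ M, ∀ q ∈ M, ∀ γ : G.Walk p q, γ.IsPath → ρ p q ≤ walkWeight w γ


section Poly

variable {E F : Type*} [AddCommGroup E] [Module ℝ E] [AddCommGroup F] [Module ℝ F]

/-- A set cut out by finitely many linear inequalities. -/
def IsPoly (S : Set E) : Prop :=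
  ∃ (n : ℕ) (f : Fin n → (E →ₗ[ℝ] ℝ)) (b : Fin n → ℝ), S = {x | ∀ i, b i ≤ f i x}

lemma isPoly_of_fintype {ι : Type*} [Fintype ι] (f : ι → (E →ₗ[ℝ] ℝ)) (b : ι → ℝ) :
    IsPoly {x | ∀ i, b i ≤ f i x} := by
  classical
  obtain ⟨e⟩ : Nonempty (ι ≃ Fin (Fintype.card ι)) := ⟨Fintype.equivFin ι⟩
  refine ⟨Fintype.card ι, fun j => f (e.symm j), fun j => b (e.symm j), ?_⟩
  ext x
  constructor
  · intro h j; exact h (e.symm j)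
  · intro h i; simpa using h (e i)

lemma IsPoly.congr {S T : Set E} (h : IsPoly S) (hST : S = T) : IsPoly T := hST ▸ h

lemma IsPoly.preimage {S : Set E} (h : IsPoly S) (g : F →ₗ[ℝ] E) : IsPoly (g ⁻¹' S) := by
  obtain ⟨n, f, b, rfl⟩ := h
  exact ⟨n, fun i => (f i).comp g, b, rfl⟩

lemma IsPoly.equiv_image {S : Set E} (h : IsPoly S) (e : E ≃ₗ[ℝ] F) : IsPoly (e '' S) := by
  have : (e '' S) = (e.symm : F →ₗ[ℝ] E) ⁻¹' S := by
    ext x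
    simp [Set.mem_image, Set.mem_preimage]
    constructor
    · rintro ⟨y, hy, rfl⟩; simpa using hy
    · intro hx; exact ⟨e.symm x, hx, by simp⟩
  exact (h.preimage (e.symm : F →ₗ[ℝ] E)).congr this.symm

lemma IsPoly.inter {S T : Set E} (hS : IsPoly S) (hT : IsPoly T) : IsPoly (S ∩ T) := by
  classical
  obtain ⟨n, f, b, rfl⟩ := hS
  obtain ⟨m, g, c, rfl⟩ := hT
  have : {x : E | ∀ i, b i ≤ f i x} ∩ {x | ∀ i, c i ≤ g i x}
      = {x | ∀ i : Fin n ⊕ Fin m, (Sum.elim b c) i ≤ (Sum.elim f g) i x} := by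
    ext x
    constructor
    · rintro ⟨h1, h2⟩ i
      cases i with
      | inl i => exact h1 i
      | inr i => exact h2 i
    · intro h
      exact ⟨fun i => h (Sum.inl i), fun i => h (Sum.inr i)⟩
  exact (isPoly_of_fintype _ _).congr this.symm

lemma isPoly_halfspace (f : E →ₗ[ℝ] ℝ) (b : ℝ) : IsPoly {x | b ≤ f x} := by
  have := isPoly_of_fintype (fun _ : Unit => f) (fun _ : Unit => b)
  exact this.congr (by ext x; simp)

/-- Fourier–Motzkin elimination: the projection of a polyhedron along a real factor
is a polyhedron. -/
lemma IsPoly.fst_image {S : Set (E × ℝ)} (h : IsPoly S) : IsPoly (Prod.fst '' S) := by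
  classical
  obtain ⟨n, f, b, rfl⟩ := h
  set g : Fin n → (E →ₗ[ℝ] ℝ) := fun i => (f i).comp (LinearMap.inl ℝ E ℝ) with hg
  set a : Fin n → ℝ := fun i => f i (0, 1) with ha
  have hf : ∀ i (x : E) (t : ℝ), f i (x, t) = g i x + t * a i := by
    intro i x t
    have h1 : (x, t) = (x, (0:ℝ)) + t • ((0:E), (1:ℝ)) := by
      simp [Prod.ext_iff]
    rw [h1, map_add, map_smul]
    simp [hg, ha, smul_eq_mul]
  -- the projected polyhedron
  set ι := ({i // a i = 0}) ⊕ ({i // 0 < a i} × {j // a j < 0}) with hι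
  set F : ι → (E →ₗ[ℝ] ℝ) := fun k =>
    Sum.elim (fun i => g i.1)
      (fun ij => (a ij.1.1)⁻¹ • g ij.1.1 - (a ij.2.1)⁻¹ • g ij.2.1) k with hF
  set B : ι → ℝ := fun k =>
    Sum.elim (fun i => b i.1)
      (fun ij => b ij.1.1 / a ij.1.1 - b ij.2.1 / a ij.2.1) k with hB
  refine (isPoly_of_fintype F B).congr ?_
  ext x
  simp only [Set.mem_setOf_eq, Set.mem_image]
  constructor
  · -- all FM constraints hold → ∃ t
    intro hx
    have h0 : ∀ i, a i = 0 → b i ≤ g i x := fun i hi => hx (Sum.inl ⟨i, hi⟩)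
    have hcross : ∀ i j, 0 < a i → a j < 0 →
        (b i - g i x) / a i ≤ (b j - g j x) / a j := by
      intro i j hi hj
      have := hx (Sum.inr ⟨⟨i, hi⟩, ⟨j, hj⟩⟩)
      simp only [hF, hB, Sum.elim_inr, LinearMap.sub_apply, LinearMap.smul_apply,
        smul_eq_mul] at this
      have e1 : (b i - g i x) / a i = b i / a i - (a i)⁻¹ * (g i x) := by
        rw [sub_div]; ring
      have e2 : (b j - g j x) / a j = b j / a j - (a j)⁻¹ * (g j x) := by
        rw [sub_div]; ring
      rw [e1, e2]; linarith
    -- construct a witness t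
    by_cases hneg : ∃ j, a j < 0
    · obtain ⟨j0, hj0⟩ := hneg
      set U : Set ℝ := Set.range (fun j : {j // a j < 0} => (b j.1 - g j.1 x) / a j.1) with hU
      have hUne : U.Nonempty := ⟨_, ⟨⟨j0, hj0⟩, rfl⟩⟩
      have hUfin : U.Finite := Set.finite_range _
      set t := sInf U with ht
      have htleU : ∀ j (hj : a j < 0), t ≤ (b j - g j x) / a j := by
        intro j hj
        exact csInf_le hUfin.bddBelow ⟨⟨j, hj⟩, rfl⟩
      have htgeL : ∀ i (hi : 0 < a i), (b i - g i x) / a i ≤ t := by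
        intro i hi
        refine le_csInf hUne ?_
        rintro u ⟨⟨j, hj⟩, rfl⟩
        exact hcross i j hi hj
      refine ⟨(x, t), ?_, rfl⟩
      intro i
      rw [hf i x t]
      rcases lt_trichotomy (a i) 0 with h | h | h
      · have := htleU i h
        rw [le_div_iff_of_neg h] at this
        linarith
      · rw [h]; simpa using h0 i h
      · have := htgeL i h
        rw [div_le_iff₀ h] at this
        linarith
    · push_neg at hneg
      set L : Set ℝ := insert 0 (Set.range (fun i : {i // 0 < a i} => (b i.1 - g i.1 x) / a i.1)) with hL
      have hLne : L.Nonempty := ⟨0, Set.mem_insert _ _⟩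
      have hLfin : L.Finite := (Set.finite_range _).insert 0
      set t := sSup L with ht
      have htgeL : ∀ i (hi : 0 < a i), (b i - g i x) / a i ≤ t := by
        intro i hi
        exact le_csSup hLfin.bddAbove (Set.mem_insert_of_mem _ ⟨⟨i, hi⟩, rfl⟩)
      refine ⟨(x, t), ?_, rfl⟩
      intro i
      rw [hf i x t]
      rcases lt_trichotomy (a i) 0 with h | h | h
      · exact absurd h (not_lt.2 (hneg i))
      · rw [h]; simpa using h0 i h
      · have := htgeL i h
        rw [div_le_iff₀ h] at this
        linarith
  · rintro ⟨⟨y, t⟩, hyt, rfl⟩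
    intro k
    match k with
    | Sum.inl ⟨i, hi⟩ =>
      have := hyt i
      rw [hf i y t] at this
      simpa [hF, hB, hi] using this
    | Sum.inr ⟨⟨i, hi⟩, ⟨j, hj⟩⟩ =>
      have h1 := hyt i
      have h2 := hyt j
      rw [hf i y t] at h1
      rw [hf j y t] at h2
      have l1 : (b i - g i y) / a i ≤ t := by
        rw [div_le_iff₀ hi]; linarith
      have l2 : t ≤ (b j - g j y) / a j := by
        rw [le_div_iff_of_neg hj]; linarith
      have := l1.trans l2
      simp only [hF, hB, Sum.elim_inr, LinearMap.sub_apply, LinearMap.smul_apply,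
        smul_eq_mul]
      have e1 : (b i - g i y) / a i = b i / a i - (a i)⁻¹ * (g i y) := by
        rw [sub_div]; ring
      have e2 : (b j - g j y) / a j = b j / a j - (a j)⁻¹ * (g j y) := by
        rw [sub_div]; ring
      rw [e1, e2] at this; linarith

end Poly



section Poly2

/-- Shuffle equivalence splitting off one coordinate. -/
noncomputable def shuffle (n : ℕ) : (ℝ × (Fin (n+1) → ℝ)) ≃ₗ[ℝ] (ℝ × (Fin n → ℝ)) × ℝ where
  toFun z := ((z.1, fun i => z.2 i.succ), z.2 0)
  invFun z := (z.1.1, Fin.cons z.2 z.1.2)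
  left_inv z := by
    refine Prod.ext rfl ?_
    funext i
    refine Fin.cases ?_ ?_ i
    · simp
    · intro j; simp
  right_inv z := by
    refine Prod.ext (Prod.ext rfl ?_) ?_
    · funext i; simp
    · simp
  map_add' z z' := rfl
  map_smul' c z := rfl

lemma isPoly_fst_image_pi :
    ∀ (n : ℕ) (S : Set (ℝ × (Fin n → ℝ))), IsPoly S → IsPoly (Prod.fst '' S) := by
  intro n
  induction n with
  | zero =>
    intro S hS
    haveI : Subsingleton (Fin 0 → ℝ) := ⟨fun a b => funext fun i => i.elim0⟩
    let e : (ℝ × (Fin 0 → ℝ)) ≃ₗ[ℝ] ℝ :=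
      { toFun := fun z => z.1
        invFun := fun t => (t, fun i => i.elim0)
        left_inv := fun z => Prod.ext rfl (Subsingleton.elim _ _)
        right_inv := fun t => rfl
        map_add' := fun _ _ => rfl
        map_smul' := fun _ _ => rfl }
    have : Prod.fst '' S = e '' S := rfl
    rw [this]
    exact hS.equiv_image e
  | succ n ih =>
    intro S hS
    have key : Prod.fst '' S = Prod.fst '' (Prod.fst '' ((shuffle n) '' S)) := by
      ext t
      constructor
      · rintro ⟨z, hz, rfl⟩
        exact ⟨(z.1, fun i => z.2 i.succ), ⟨(shuffle n) z, ⟨z, hz, rfl⟩, rfl⟩, rfl⟩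
      · rintro ⟨y, ⟨y', ⟨z, hz, rfl⟩, rfl⟩, rfl⟩
        exact ⟨z, hz, rfl⟩
    rw [key]
    exact ih _ ((hS.equiv_image (shuffle n)).fst_image)

lemma isPoly_image_linfun {n : ℕ} {S : Set (Fin n → ℝ)} (hS : IsPoly S)
    (φ : (Fin n → ℝ) →ₗ[ℝ] ℝ) : IsPoly (φ '' S) := by
  classical
  set ψ : (ℝ × (Fin n → ℝ)) →ₗ[ℝ] ℝ :=
    LinearMap.fst ℝ ℝ (Fin n → ℝ) - φ.comp (LinearMap.snd ℝ ℝ (Fin n → ℝ)) with hψ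
  set T : Set (ℝ × (Fin n → ℝ)) :=
    ((LinearMap.snd ℝ ℝ (Fin n → ℝ)) ⁻¹' S) ∩ ({z | 0 ≤ ψ z} ∩ {z | 0 ≤ (-ψ) z}) with hT
  have hTpoly : IsPoly T :=
    (hS.preimage _).inter ((isPoly_halfspace ψ 0).inter (isPoly_halfspace (-ψ) 0))
  have : φ '' S = Prod.fst '' T := by
    ext t
    constructor
    · rintro ⟨x, hx, rfl⟩
      refine ⟨(φ x, x), ⟨hx, ?_, ?_⟩, rfl⟩ <;> simp [hψ]
    · rintro ⟨z, ⟨hz1, hz2, hz3⟩, rfl⟩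
      refine ⟨z.2, hz1, ?_⟩
      simp only [hψ, LinearMap.sub_apply, LinearMap.fst_apply, LinearMap.comp_apply,
        LinearMap.snd_apply, LinearMap.neg_apply, Set.mem_setOf_eq] at hz2 hz3
      linarith
  rw [this]
  exact isPoly_fst_image_pi n T hTpoly

lemma IsPoly.csInf_mem {T : Set ℝ} (h : IsPoly T) (hne : T.Nonempty) (hbd : BddBelow T) :
    sInf T ∈ T := by
  obtain ⟨n, f, b, rfl⟩ := h
  intro i
  obtain ⟨t0, ht0⟩ := hne
  set a : ℝ := f i 1 with ha
  have hfi : ∀ t : ℝ, f i t = t * a := by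
    intro t
    calc f i t = f i (t • (1:ℝ)) := by norm_num
    _ = t • f i 1 := map_smul _ _ _
    _ = t * a := by rw [smul_eq_mul, ha]
  rcases lt_trichotomy a 0 with hlt | heq | hgt
  · have h1 : sInf {x : ℝ | ∀ i, b i ≤ f i x} ≤ t0 := csInf_le hbd ht0
    have h2 : b i ≤ t0 * a := by rw [← hfi]; exact ht0 i
    rw [hfi]
    nlinarith
  · rw [hfi, heq, mul_zero]
    have := ht0 i
    rw [hfi, heq, mul_zero] at this
    exact this
  · have hlb : ∀ t ∈ {x : ℝ | ∀ i, b i ≤ f i x}, b i / a ≤ t := by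
      intro t ht
      rw [div_le_iff₀ hgt]
      have := ht i; rw [hfi] at this; linarith
    have : b i / a ≤ sInf {x : ℝ | ∀ i, b i ≤ f i x} := le_csInf ⟨t0, ht0⟩ hlb
    rw [hfi, ← div_le_iff₀ hgt]
    exact this

/-- A linear functional bounded below on a nonempty polyhedron attains its minimum. -/
lemma isPoly_exists_min {α : Type*} [Fintype α] {S : Set (α → ℝ)} (hS : IsPoly S)
    (hne : S.Nonempty) (φ : (α → ℝ) →ₗ[ℝ] ℝ) (hbd : ∃ c, ∀ x ∈ S, c ≤ φ x) :
    ∃ x ∈ S, ∀ y ∈ S, φ x ≤ φ y := by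
  classical
  set n := Fintype.card α with hn
  set e : (α → ℝ) ≃ₗ[ℝ] (Fin n → ℝ) :=
    LinearEquiv.piCongrLeft' ℝ (fun _ : α => ℝ) (Fintype.equivFin α) with he
  set S' : Set (Fin n → ℝ) := e '' S with hS'
  set φ' : (Fin n → ℝ) →ₗ[ℝ] ℝ := φ.comp (e.symm : (Fin n → ℝ) →ₗ[ℝ] (α → ℝ)) with hφ'
  have hφ'e : ∀ x : α → ℝ, φ' (e x) = φ x := by
    intro x; simp [hφ']
  set T : Set ℝ := φ' '' S' with hT
  have hTpoly : IsPoly T := isPoly_image_linfun (hS.equiv_image e) φ'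
  obtain ⟨c, hc⟩ := hbd
  have hTbdd : BddBelow T := by
    refine ⟨c, ?_⟩
    rintro t ⟨y, ⟨x, hx, rfl⟩, rfl⟩
    rw [hφ'e]
    exact hc x hx
  obtain ⟨x0, hx0⟩ := hne
  have hTne : T.Nonempty := ⟨φ' (e x0), ⟨e x0, ⟨x0, hx0, rfl⟩, rfl⟩⟩
  have hmem := hTpoly.csInf_mem hTne hTbdd
  obtain ⟨y, ⟨x, hx, rfl⟩, hyv⟩ := hmem
  refine ⟨x, hx, ?_⟩
  intro z hz
  rw [← hφ'e x, hyv]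
  have : φ z ∈ T := ⟨e z, ⟨z, hz, rfl⟩, (hφ'e z)⟩
  exact csInf_le hTbdd this

end Poly2





section Tree

variable {G : SimpleGraph V}

open SimpleGraph

/-- The unique path between two vertices of a tree. -/
noncomputable def tpath (hG : G.IsTree) (u v : V) : G.Walk u v :=
  (hG.existsUnique_path u v).choose

lemma tpath_isPath (hG : G.IsTree) (u v : V) : (tpath hG u v).IsPath :=
  (hG.existsUnique_path u v).choose_spec.1

lemma tpath_unique (hG : G.IsTree) {u v : V} {p : G.Walk u v} (hp : p.IsPath) :
    p = tpath hG u v :=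
  (hG.existsUnique_path u v).choose_spec.2 p hp

lemma tpath_self (hG : G.IsTree) (u : V) : tpath hG u u = SimpleGraph.Walk.nil :=
  (tpath_unique hG (SimpleGraph.Walk.IsPath.nil)).symm

lemma tpath_reverse (hG : G.IsTree) (u v : V) :
    (tpath hG u v).reverse = tpath hG v u :=
  tpath_unique hG ((tpath_isPath hG u v).reverse)

@[simp] lemma walkWeight_nil (w : Sym2 V → ℝ) {u : V} :
    walkWeight w (SimpleGraph.Walk.nil : G.Walk u u) = 0 := rfl

lemma walkWeight_cons (w : Sym2 V → ℝ) {u v x : V} (h : G.Adj u v) (p : G.Walk v x) :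
    walkWeight w (SimpleGraph.Walk.cons h p) = w s(u, v) + walkWeight w p := by
  simp [walkWeight, SimpleGraph.Walk.edges_cons]

lemma walkWeight_append (w : Sym2 V → ℝ) {u v x : V} (p : G.Walk u v) (q : G.Walk v x) :
    walkWeight w (p.append q) = walkWeight w p + walkWeight w q := by
  simp [walkWeight, SimpleGraph.Walk.edges_append]

lemma walkWeight_reverse (w : Sym2 V → ℝ) {u v : V} (p : G.Walk u v) :
    walkWeight w p.reverse = walkWeight w p := by
  simp only [walkWeight, SimpleGraph.Walk.edges_reverse]
  rw [List.map_reverse, List.sum_reverse]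

/-- Splitting the unique path at an interior vertex. -/
lemma tpath_append (hG : G.IsTree) {u v x : V} (h : x ∈ (tpath hG u v).support) :
    tpath hG u v = (tpath hG u x).append (tpath hG x v) := by
  classical
  have ht : ((tpath hG u v).takeUntil x h) = tpath hG u x :=
    tpath_unique hG ((tpath_isPath hG u v).takeUntil h)
  have hd : ((tpath hG u v).dropUntil x h) = tpath hG x v :=
    tpath_unique hG ((tpath_isPath hG u v).dropUntil h)
  rw [← ht, ← hd, SimpleGraph.Walk.take_spec]

lemma tpath_adj (hG : G.IsTree) {u v : V} (h : G.Adj u v) :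
    tpath hG u v = SimpleGraph.Walk.cons h SimpleGraph.Walk.nil := by
  refine (tpath_unique hG ?_).symm
  simp [SimpleGraph.Walk.isPath_def, h.ne]

end Tree



section Rooted

open SimpleGraph Finset

variable {G : SimpleGraph V}

/-- Parent of a vertex in the tree rooted at `r`. -/
noncomputable def par (hG : G.IsTree) (r v : V) : V := (tpath hG v r).getVert 1

/-- Depth of a vertex in the tree rooted at `r`. -/
noncomputable def dep (hG : G.IsTree) (r v : V) : ℕ := (tpath hG r v).length

lemma adj_par (hG : G.IsTree) {r v : V} (hv : v ≠ r) : G.Adj v (par hG r v) :=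
  SimpleGraph.Walk.adj_snd (SimpleGraph.Walk.not_nil_of_ne hv)

lemma tpath_par (hG : G.IsTree) {r v : V} (hv : v ≠ r) :
    tpath hG v r = SimpleGraph.Walk.cons (adj_par hG hv) (tpath hG (par hG r v) r) := by
  have hnn : ¬ (tpath hG v r).Nil := SimpleGraph.Walk.not_nil_of_ne hv
  have hc := SimpleGraph.Walk.cons_tail_eq (tpath hG v r) hnn
  have hpath : (tpath hG v r).tail.IsPath := by
    have := tpath_isPath hG v r
    rw [← hc] at this
    exact this.of_cons
  have := tpath_unique hG hpath
  rw [← hc]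
  congr 1

lemma dep_par (hG : G.IsTree) {r v : V} (hv : v ≠ r) :
    dep hG r v = dep hG r (par hG r v) + 1 := by
  have h1 : dep hG r v = (tpath hG v r).length := by
    rw [dep, ← tpath_reverse hG v r, SimpleGraph.Walk.length_reverse]
  have h2 : dep hG r (par hG r v) = (tpath hG (par hG r v) r).length := by
    rw [dep, ← tpath_reverse hG _ r, SimpleGraph.Walk.length_reverse]
  rw [h1, h2, tpath_par hG hv, SimpleGraph.Walk.length_cons]

variable [Fintype V] [DecidableEq V]

/-- The descendants (inclusive) of `v` in the tree rooted at `r`. -/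
noncomputable def descF (hG : G.IsTree) (r v : V) : Finset V :=
  Finset.univ.filter (fun u => v ∈ (tpath hG r u).support)

/-- The children of `v` in the tree rooted at `r`. -/
noncomputable def chF (hG : G.IsTree) (r v : V) : Finset V :=
  Finset.univ.filter (fun c => c ≠ r ∧ par hG r c = v)

lemma mem_descF {hG : G.IsTree} {r v u : V} :
    u ∈ descF hG r v ↔ v ∈ (tpath hG r u).support := by
  classical
  simp [descF]

lemma mem_chF {hG : G.IsTree} {r v c : V} :
    c ∈ chF hG r v ↔ c ≠ r ∧ par hG r c = v := by
  classical
  simp [chF]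

lemma self_mem_descF {hG : G.IsTree} {r v : V} : v ∈ descF hG r v :=
  mem_descF.2 (SimpleGraph.Walk.end_mem_support _)

lemma support_subset_descF {hG : G.IsTree} {r v u : V} (hu : u ∈ descF hG r v) :
    ∀ x ∈ (tpath hG v u).support, x ∈ descF hG r v := by
  classical
  intro x hx
  have hv : v ∈ (tpath hG r u).support := mem_descF.1 hu
  have hsplit := tpath_append hG hv
  set T := (tpath hG v u).takeUntil x hx with hT
  have hq : ((tpath hG r v).append T).IsPath := by
    rw [SimpleGraph.Walk.isPath_def, SimpleGraph.Walk.support_append]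
    have hnodup : ((tpath hG r v).support ++ (tpath hG v u).support.tail).Nodup := by
      rw [← SimpleGraph.Walk.support_append, ← hsplit]
      exact (tpath_isPath hG r u).2
    obtain ⟨rest, hrest⟩ : ∃ rest, T.support ++ rest = (tpath hG v u).support :=
      ⟨((tpath hG v u).dropUntil x hx).support.tail, by
        rw [← SimpleGraph.Walk.support_append, SimpleGraph.Walk.take_spec]⟩
    have htail : (tpath hG v u).support.tail = T.support.tail ++ rest := by
      rw [← hrest, List.tail_append_of_ne_nil (SimpleGraph.Walk.support_ne_nil _)]
    rw [htail] at hnodup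
    rw [← List.append_assoc] at hnodup
    exact hnodup.of_append_left
  have hqx : (tpath hG r v).append T = tpath hG r x := tpath_unique hG hq
  refine mem_descF.2 ?_
  rw [← hqx, SimpleGraph.Walk.mem_support_append_iff]
  exact Or.inl (SimpleGraph.Walk.end_mem_support _)

lemma descF_trans {hG : G.IsTree} {r v c u : V} (hu : u ∈ descF hG r c)
    (hc : c ∈ descF hG r v) : u ∈ descF hG r v := by
  have hcu : c ∈ (tpath hG r u).support := mem_descF.1 hu
  have hsplit := tpath_append hG hcu
  refine mem_descF.2 ?_
  rw [hsplit, SimpleGraph.Walk.mem_support_append_iff]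
  exact Or.inl (mem_descF.1 hc)

lemma eq_of_mem_support_dep_le {hG : G.IsTree} {r c c' : V}
    (h : c ∈ (tpath hG r c').support) (hd : dep hG r c' ≤ dep hG r c) : c = c' := by
  have hsplit := tpath_append hG h
  have hlen : dep hG r c' = dep hG r c + (tpath hG c c').length := by
    rw [dep, dep, hsplit, SimpleGraph.Walk.length_append]
  have : (tpath hG c c').length = 0 := by omega
  exact SimpleGraph.Walk.eq_of_length_eq_zero this

lemma child_mem_descF {hG : G.IsTree} {r v c : V} (hc : c ∈ chF hG r v) :
    c ∈ descF hG r v := by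
  obtain ⟨hcr, hpar⟩ := mem_chF.1 hc
  subst hpar
  refine mem_descF.2 ?_
  rw [← tpath_reverse hG c r, SimpleGraph.Walk.support_reverse, List.mem_reverse]
  rw [tpath_par hG hcr, SimpleGraph.Walk.support_cons]
  exact List.mem_cons_of_mem _ (SimpleGraph.Walk.start_mem_support _)

lemma dep_child {hG : G.IsTree} {r v c : V} (hc : c ∈ chF hG r v) :
    dep hG r c = dep hG r v + 1 := by
  obtain ⟨hcr, hpar⟩ := mem_chF.1 hc
  rw [dep_par hG hcr, hpar]

lemma child_not_mem_tpath {hG : G.IsTree} {r v c : V} (hc : c ∈ chF hG r v) :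
    c ∉ (tpath hG r v).support := by
  intro h
  have hd : dep hG r v ≤ dep hG r c := by rw [dep_child hc]; omega
  have := eq_of_mem_support_dep_le h hd
  subst this
  have := dep_child hc
  omega

lemma root_not_mem_descF_child {hG : G.IsTree} {r v c : V} (hc : c ∈ chF hG r v) :
    v ∉ descF hG r c := fun h => child_not_mem_tpath hc (mem_descF.1 h)

lemma descF_child_subset {hG : G.IsTree} {r v c : V} (hc : c ∈ chF hG r v) :
    descF hG r c ⊆ (descF hG r v).erase v := by
  classical
  intro u hu
  refine Finset.mem_erase.2 ⟨?_, descF_trans hu (child_mem_descF hc)⟩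
  rintro rfl
  exact root_not_mem_descF_child hc hu

lemma descF_child_disjoint {hG : G.IsTree} {r v : V} {c c' : V} (hc : c ∈ chF hG r v)
    (hc' : c' ∈ chF hG r v) (hne : c ≠ c') : Disjoint (descF hG r c) (descF hG r c') := by
  classical
  rw [Finset.disjoint_left]
  intro u hu hu'
  have h1 : c ∈ (tpath hG r u).support := mem_descF.1 hu
  have h2 : c' ∈ (tpath hG r u).support := mem_descF.1 hu'
  have hsplit := tpath_append hG h1
  rw [hsplit, SimpleGraph.Walk.mem_support_append_iff] at h2
  have hdep : dep hG r c = dep hG r c' := by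
    rw [dep_child hc, dep_child hc']
  rcases h2 with h2 | h2
  · exact hne (eq_of_mem_support_dep_le h2 hdep.le).symm
  · have : c' ∈ descF hG r c := support_subset_descF hu _ h2
    have hcc' : c ∈ (tpath hG r c').support := mem_descF.1 this
    exact hne (eq_of_mem_support_dep_le hcc' hdep.ge)

end Rooted



section Rooted2

open SimpleGraph Finset

variable {G : SimpleGraph V}

lemma par_dichotomy (hG : G.IsTree) (r : V) {v x : V} (h : G.Adj v x) :
    (v ≠ r ∧ par hG r v = x) ∨ (x ≠ r ∧ par hG r x = v) := by
  classical
  by_cases hv : v ∈ (tpath hG x r).support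
  · right
    have hxv : tpath hG x v = SimpleGraph.Walk.cons h.symm SimpleGraph.Walk.nil :=
      tpath_adj hG h.symm
    have hsplit := tpath_append hG hv
    rw [hxv] at hsplit
    rw [SimpleGraph.Walk.cons_append, SimpleGraph.Walk.nil_append] at hsplit
    constructor
    · rintro rfl
      rw [tpath_self] at hsplit
      exact SimpleGraph.Walk.not_nil_cons (hsplit ▸ SimpleGraph.Walk.nil_nil)
    · rw [par, hsplit, SimpleGraph.Walk.getVert_cons_succ, SimpleGraph.Walk.getVert_zero]
  · left
    have hpath : (SimpleGraph.Walk.cons h (tpath hG x r)).IsPath :=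
      (tpath_isPath hG x r).cons hv
    have heq : SimpleGraph.Walk.cons h (tpath hG x r) = tpath hG v r :=
      tpath_unique hG hpath
    constructor
    · rintro rfl
      exact hv (SimpleGraph.Walk.end_mem_support _)
    · rw [par, ← heq, SimpleGraph.Walk.getVert_cons_succ, SimpleGraph.Walk.getVert_zero]

variable [Fintype V] [DecidableEq V]

lemma exists_child (hG : G.IsTree) (r : V) {v u : V} (hu : u ∈ descF hG r v) (hne : u ≠ v) :
    ∃ c ∈ chF hG r v, u ∈ descF hG r c := by
  have hv : v ∈ (tpath hG r u).support := mem_descF.1 hu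
  have hsplit := tpath_append hG hv
  set q := tpath hG v u with hq
  have hqnil : ¬ q.Nil := SimpleGraph.Walk.not_nil_of_ne (Ne.symm hne)
  set c₀ := q.getVert 1 with hc₀
  have hadj : G.Adj v c₀ := SimpleGraph.Walk.adj_snd hqnil
  have hc₀q : c₀ ∈ q.support.tail := by
    rw [← SimpleGraph.Walk.support_tail_of_not_nil q hqnil]
    exact SimpleGraph.Walk.start_mem_support _
  have hc₀mem : c₀ ∈ q.support := List.mem_of_mem_tail hc₀q
  have hc₀notin : c₀ ∉ (tpath hG r v).support := by
    have hnodup : ((tpath hG r v).support ++ q.support.tail).Nodup := by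
      rw [← SimpleGraph.Walk.support_append, ← hsplit]
      exact (tpath_isPath hG r u).2
    exact fun hmem => (List.disjoint_of_nodup_append hnodup) hmem hc₀q
  have hchild : c₀ ∈ chF hG r v := by
    rcases par_dichotomy hG r hadj with ⟨hvr, hpar⟩ | ⟨hcr, hpar⟩
    · exfalso
      apply hc₀notin
      rw [← tpath_reverse hG v r, SimpleGraph.Walk.support_reverse, List.mem_reverse, ← hpar]
      rw [tpath_par hG hvr, SimpleGraph.Walk.support_cons]
      exact List.mem_cons_of_mem _ (SimpleGraph.Walk.start_mem_support _)
    · exact mem_chF.2 ⟨hcr, hpar⟩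
  refine ⟨c₀, hchild, mem_descF.2 ?_⟩
  rw [hsplit, SimpleGraph.Walk.mem_support_append_iff]
  exact Or.inr hc₀mem

lemma descF_erase_eq_biUnion (hG : G.IsTree) (r v : V) :
    (descF hG r v).erase v = (chF hG r v).biUnion (fun c => descF hG r c) := by
  ext u
  constructor
  · intro hu
    obtain ⟨hne, hmem⟩ := Finset.mem_erase.1 hu
    obtain ⟨c, hc, hcu⟩ := exists_child hG r hmem hne
    exact Finset.mem_biUnion.2 ⟨c, hc, hcu⟩
  · intro hu
    obtain ⟨c, hc, hcu⟩ := Finset.mem_biUnion.1 hu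
    exact descF_child_subset hc hcu

/-- Sum of the parent-edge weights over the strict descendants of `v`. -/
noncomputable def tsub (hG : G.IsTree) (r : V) (w : Sym2 V → ℝ) (v : V) : ℝ :=
  ∑ u ∈ (descF hG r v).erase v, w s(u, par hG r u)

lemma tsub_rec (hG : G.IsTree) (r : V) (w : Sym2 V → ℝ) (v : V) :
    tsub hG r w v = ∑ c ∈ chF hG r v, (w s(v, c) + tsub hG r w c) := by
  rw [tsub, descF_erase_eq_biUnion hG r v, Finset.sum_biUnion]
  · refine Finset.sum_congr rfl ?_
    intro c hc
    have hcp : par hG r c = v := (mem_chF.1 hc).2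
    rw [← Finset.sum_erase_add _ _ (self_mem_descF (hG := hG) (r := r) (v := c))]
    rw [hcp, add_comm, Sym2.eq_swap]
    rfl
  · intro c hc c' hc' hne
    exact descF_child_disjoint hc hc' hne

lemma sum_ge_min_of_pairwise {α : Type*} [DecidableEq α] {s : Finset α} (hs : s.Nonempty)
    (p : α → ℝ) (hp : ∀ a ∈ s, ∀ b ∈ s, a ≠ b → 0 ≤ p a + p b) :
    ∃ a ∈ s, p a ≤ ∑ b ∈ s, p b := by
  obtain ⟨a, ha, hmin⟩ := Finset.exists_min_image s p hs
  refine ⟨a, ha, ?_⟩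
  rw [← Finset.sum_erase_add _ _ ha]
  have : 0 ≤ ∑ b ∈ s.erase a, p b := by
    refine Finset.sum_nonneg ?_
    intro b hb
    obtain ⟨hba, hbs⟩ := Finset.mem_erase.1 hb
    by_contra hneg
    push_neg at hneg
    have h1 : p a ≤ p b := hmin b hbs
    have := hp a ha b hbs (Ne.symm hba)
    linarith
  linarith

end Rooted2



section MainInd

open SimpleGraph Finset

variable {G : SimpleGraph V} [Fintype V] [DecidableEq V]

lemma adj_child {hG : G.IsTree} {r v c : V} (hc : c ∈ chF hG r v) : G.Adj v c := by
  obtain ⟨hcr, hpar⟩ := mem_chF.1 hc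
  subst hpar
  exact (adj_par hG hcr).symm

lemma main_ind (hG : G.IsTree) {M : Set V} {ρ : V → V → ℝ}
    (hρ : IsPseudometricOn M ρ)
    (hM : ∀ v : V, deg G v = 1 → v ∈ M)
    {r : V} (hr : r ∈ M) (w : Sym2 V → ℝ)
    (hw : ∀ p ∈ M, ∀ q ∈ M, ∀ γ : G.Walk p q, γ.IsPath → ρ p q ≤ walkWeight w γ) :
    ∀ (n : ℕ) (v : V), (descF hG r v).card ≤ n →
      ∃ ℓ ∈ M, ℓ ∈ descF hG r v ∧ walkWeight w (tpath hG v ℓ) ≤ tsub hG r w v := by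
  intro n
  induction n with
  | zero =>
    intro v h
    have := Finset.card_pos.2 ⟨v, self_mem_descF (hG := hG) (r := r) (v := v)⟩
    omega
  | succ n ih =>
    intro v hcard
    by_cases hch : (chF hG r v).Nonempty
    · -- inductive case: v has children
      have hcards : ∀ c ∈ chF hG r v, (descF hG r c).card ≤ n := by
        intro c hc
        have h1 := Finset.card_le_card (descF_child_subset hc)
        have h3 := Finset.card_erase_of_mem (self_mem_descF (hG := hG) (r := r) (v := v))
        have h4 := Finset.card_pos.2 ⟨v, self_mem_descF (hG := hG) (r := r) (v := v)⟩
        omega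
      have hch' : ∀ c : V, ∃ ℓ : V, c ∈ chF hG r v →
          ℓ ∈ M ∧ ℓ ∈ descF hG r c ∧ walkWeight w (tpath hG c ℓ) ≤ tsub hG r w c := by
        intro c
        by_cases hc : c ∈ chF hG r v
        · obtain ⟨ℓ, h1, h2, h3⟩ := ih c (hcards c hc)
          exact ⟨ℓ, fun _ => ⟨h1, h2, h3⟩⟩
        · exact ⟨v, fun h => absurd h hc⟩
      choose f hf using hch'
      have hrepr : ∀ c (hc : c ∈ chF hG r v),
          tpath hG v (f c) = SimpleGraph.Walk.cons (adj_child hc) (tpath hG c (f c)) := by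
        intro c hc
        refine (tpath_unique hG ?_).symm
        refine (tpath_isPath hG c (f c)).cons ?_
        intro hmem
        exact root_not_mem_descF_child hc (support_subset_descF (hf c hc).2.1 _ hmem)
      have hDvc : ∀ c (hc : c ∈ chF hG r v),
          walkWeight w (tpath hG v (f c)) = w s(v, c) + walkWeight w (tpath hG c (f c)) := by
        intro c hc
        rw [hrepr c hc, walkWeight_cons]
      have hpair : ∀ c ∈ chF hG r v, ∀ c' ∈ chF hG r v, c ≠ c' →
          0 ≤ walkWeight w (tpath hG v (f c)) + walkWeight w (tpath hG v (f c')) := by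
        intro c hc c' hc' hne
        set q := ((tpath hG v (f c)).reverse.append (tpath hG v (f c'))) with hq
        have hsubc : ∀ x ∈ (tpath hG c (f c)).support, x ∈ descF hG r c :=
          support_subset_descF (hf c hc).2.1
        have hsubc' : ∀ x ∈ (tpath hG c' (f c')).support, x ∈ descF hG r c' :=
          support_subset_descF (hf c' hc').2.1
        have hpathq : q.IsPath := by
          rw [SimpleGraph.Walk.isPath_def, hq, SimpleGraph.Walk.support_append,
            SimpleGraph.Walk.support_reverse, hrepr c hc, hrepr c' hc',
            SimpleGraph.Walk.support_cons, SimpleGraph.Walk.support_cons, List.tail_cons]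
          refine List.Nodup.append ?_ ?_ ?_
          · rw [List.nodup_reverse, ← SimpleGraph.Walk.support_cons,
              ← hrepr c hc]
            · exact (tpath_isPath hG v (f c)).2
            · exact adj_child hc
          · exact (tpath_isPath hG c' (f c')).2
          · intro x hx hx'
            rw [List.mem_reverse, List.mem_cons] at hx
            have hxdesc' : x ∈ descF hG r c' := hsubc' x hx'
            rcases hx with rfl | hx
            · exact root_not_mem_descF_child hc' hxdesc'
            · have hxdesc : x ∈ descF hG r c := hsubc x hx
              exact Finset.disjoint_left.1 (descF_child_disjoint hc hc' hne) hxdesc hxdesc'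
        have hweight : walkWeight w q =
            walkWeight w (tpath hG v (f c)) + walkWeight w (tpath hG v (f c')) := by
          rw [hq, walkWeight_append, walkWeight_reverse]
        have h0 : 0 ≤ ρ (f c) (f c') :=
          hρ.2.1 _ (hf c hc).1 _ (hf c' hc').1
        have := hw _ (hf c hc).1 _ (hf c' hc').1 q hpathq
        linarith
      obtain ⟨a, ha, hmin⟩ := sum_ge_min_of_pairwise hch
        (fun c => walkWeight w (tpath hG v (f c))) hpair
      refine ⟨f a, (hf a ha).1,
        descF_trans (hf a ha).2.1 (child_mem_descF ha), ?_⟩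
      have hsum1 : ∑ c ∈ chF hG r v, walkWeight w (tpath hG v (f c)) ≤ tsub hG r w v := by
        rw [tsub_rec]
        refine Finset.sum_le_sum ?_
        intro c hc
        rw [hDvc c hc]
        have := (hf c hc).2.2
        linarith
      exact hmin.trans hsum1
    · -- base case: v has no children
      have hempty : (descF hG r v).erase v = ∅ := by
        rw [descF_erase_eq_biUnion]
        rw [Finset.not_nonempty_iff_eq_empty] at hch
        simp [hch]
      have htsub : tsub hG r w v = 0 := by rw [tsub, hempty]; simp
      have hvM : v ∈ M := by
        rcases eq_or_ne v r with rfl | hvr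
        · exact hr
        · apply hM
          have hnbr : G.neighborSet v = {par hG r v} := by
            ext x
            simp only [SimpleGraph.mem_neighborSet, Set.mem_singleton_iff]
            constructor
            · intro hadj
              rcases par_dichotomy hG r hadj with ⟨_, hp⟩ | ⟨hxr, hp⟩
              · exact hp.symm
              · exfalso
                rw [Finset.not_nonempty_iff_eq_empty] at hch
                have : x ∈ chF hG r v := mem_chF.2 ⟨hxr, hp⟩
                rw [hch] at this
                exact absurd this (Finset.notMem_empty x)
            · rintro rfl
              exact adj_par hG hvr
          rw [deg, hnbr, Set.ncard_singleton]
      refine ⟨v, hvM, self_mem_descF, ?_⟩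
      rw [tpath_self, htsub]
      simp

end MainInd



section Total

open SimpleGraph Finset

variable {G : SimpleGraph V} [Fintype V] [DecidableEq V]

lemma descF_root (hG : G.IsTree) (r : V) : descF hG r r = Finset.univ := by
  ext u
  simp only [Finset.mem_univ, iff_true]
  exact mem_descF.2 (SimpleGraph.Walk.start_mem_support _)

lemma par_ne (hG : G.IsTree) {r u : V} (hu : u ≠ r) : par hG r u ≠ u :=
  fun h => G.irrefl (h ▸ adj_par hG hu)

lemma edge_sum_eq_tsub (hG : G.IsTree) (r : V) (w : Sym2 V → ℝ) :
    ∑ e ∈ G.edgeSet.toFinite.toFinset, w e = tsub hG r w r := by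
  classical
  rw [tsub, descF_root hG r]
  refine (Finset.sum_bij (fun (u : V) (hu : u ∈ Finset.univ.erase r) => s(u, par hG r u))
    ?_ ?_ ?_ ?_).symm
  · intro u hu
    rw [Set.Finite.mem_toFinset, SimpleGraph.mem_edgeSet]
    exact adj_par hG (Finset.mem_erase.1 hu).1
  · intro u hu u' hu' heq
    have hur := (Finset.mem_erase.1 hu).1
    have hur' := (Finset.mem_erase.1 hu').1
    rw [Sym2.eq_iff] at heq
    rcases heq with ⟨h1, _⟩ | ⟨h1, h2⟩
    · exact h1
    · -- u = par u' and par u = u'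
      exfalso
      have d1 : dep hG r u = dep hG r (par hG r u) + 1 := dep_par hG hur
      have d2 : dep hG r u' = dep hG r (par hG r u') + 1 := dep_par hG hur'
      rw [h2] at d1
      rw [← h1] at d2
      omega
  · intro e he
    rw [Set.Finite.mem_toFinset] at he
    induction e with
    | _ a b =>
      have hadj : G.Adj a b := (SimpleGraph.mem_edgeSet G).1 he
      rcases par_dichotomy hG r hadj with ⟨har, hp⟩ | ⟨hbr, hp⟩
      · exact ⟨a, Finset.mem_erase.2 ⟨har, Finset.mem_univ a⟩, by
          show s(a, par hG r a) = s(a, b)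
          rw [hp]⟩
      · exact ⟨b, Finset.mem_erase.2 ⟨hbr, Finset.mem_univ b⟩, by
          show s(b, par hG r b) = s(a, b)
          rw [hp, Sym2.eq_swap]⟩
  · intro u hu
    rfl

lemma deg_eq_degree (v : V) [DecidableRel G.Adj] : deg G v = G.degree v := by
  rw [deg, Set.ncard_eq_toFinset_card']
  congr 1

lemma exists_leaf (hG : G.IsTree) (h2 : 1 < Fintype.card V) : ∃ v, deg G v = 1 := by
  classical
  by_contra hcon
  push_neg at hcon
  have hdeg : ∀ v : V, 2 ≤ G.degree v := by
    intro v
    have hpos : 0 < G.degree v := by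
      rw [SimpleGraph.degree_pos_iff_exists_adj]
      obtain ⟨u, hu⟩ := Fintype.exists_ne_of_one_lt_card h2 v
      obtain ⟨p⟩ := hG.isConnected.preconnected v u
      have hnn : ¬ p.Nil := SimpleGraph.Walk.not_nil_of_ne (Ne.symm hu)
      exact ⟨p.getVert 1, SimpleGraph.Walk.adj_snd hnn⟩
    have hne := hcon v
    rw [deg_eq_degree] at hne
    omega
  have hsum := SimpleGraph.sum_degrees_eq_twice_card_edges G
  have hcardE : G.edgeFinset.card + 1 = Fintype.card V := hG.card_edgeFinset
  have : 2 * Fintype.card V ≤ ∑ v : V, G.degree v := by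
    calc 2 * Fintype.card V = ∑ _v : V, 2 := by
          rw [Finset.sum_const, Finset.card_univ, smul_eq_mul]; ring
    _ ≤ ∑ v : V, G.degree v := Finset.sum_le_sum (fun v _ => hdeg v)
  omega

lemma total_nonneg (hG : G.IsTree) {M : Set V} {ρ : V → V → ℝ}
    (hρ : IsPseudometricOn M ρ)
    (hM : ∀ v : V, deg G v = 1 → v ∈ M)
    (w : Sym2 V → ℝ)
    (hw : ∀ p ∈ M, ∀ q ∈ M, ∀ γ : G.Walk p q, γ.IsPath → ρ p q ≤ walkWeight w γ) :
    0 ≤ ∑ e ∈ G.edgeSet.toFinite.toFinset, w e := by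
  classical
  by_cases h2 : 1 < Fintype.card V
  · obtain ⟨r, hrdeg⟩ := exists_leaf hG h2
    have hr : r ∈ M := hM r hrdeg
    obtain ⟨ℓ, hℓM, _, hℓ⟩ := main_ind hG hρ hM hr w hw (descF hG r r).card r le_rfl
    have h1 : ρ r ℓ ≤ walkWeight w (tpath hG r ℓ) :=
      hw r hr ℓ hℓM (tpath hG r ℓ) (tpath_isPath hG r ℓ)
    have h0 : 0 ≤ ρ r ℓ := hρ.2.1 r hr ℓ hℓM
    rw [edge_sum_eq_tsub hG r w]
    linarith
  · have hempty : G.edgeSet.toFinite.toFinset = ∅ := by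
      rw [Finset.eq_empty_iff_forall_notMem]
      intro e he
      rw [Set.Finite.mem_toFinset] at he
      induction e with
      | _ a b =>
        have hadj : G.Adj a b := (SimpleGraph.mem_edgeSet G).1 he
        have hle : Fintype.card V ≤ 1 := by omega
        have : a = b := Fintype.card_le_one_iff.1 hle a b
        exact hadj.ne this
    rw [hempty, Finset.sum_empty]

end Total



section Glue

open SimpleGraph

variable {G : SimpleGraph V}

lemma list_map_sum_add (l : List (Sym2 V)) (f g : Sym2 V → ℝ) :
    (l.map (fun e => f e + g e)).sum = (l.map f).sum + (l.map g).sum := by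
  induction l with
  | nil => simp
  | cons a l ih => simp [ih]; ring

lemma list_map_sum_smul (c : ℝ) (l : List (Sym2 V)) (f : Sym2 V → ℝ) :
    (l.map (fun e => c * f e)).sum = c * (l.map f).sum := by
  induction l with
  | nil => simp
  | cons a l ih => simp [ih]; ring

/-- The weight of a walk, as a linear map in the weight function. -/
noncomputable def walkWeightL {u v : V} (γ : G.Walk u v) : (Sym2 V → ℝ) →ₗ[ℝ] ℝ where
  toFun w := walkWeight w γ
  map_add' w w' := list_map_sum_add γ.edges w w'
  map_smul' c w := list_map_sum_smul c γ.edges w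

@[simp] lemma walkWeightL_apply {u v : V} (γ : G.Walk u v) (w : Sym2 V → ℝ) :
    walkWeightL γ w = walkWeight w γ := rfl

variable [Fintype V]

/-- The total weight, as a linear map in the weight function. -/
noncomputable def gwL (G : SimpleGraph V) : (Sym2 V → ℝ) →ₗ[ℝ] ℝ where
  toFun w := ∑ e ∈ G.edgeSet.toFinite.toFinset, w e
  map_add' w w' := by simp [Finset.sum_add_distrib]
  map_smul' c w := by simp [Finset.mul_sum]

lemma graphWeight_eq_gwL (w : Sym2 V → ℝ) : graphWeight G w = gwL G w := by
  rw [graphWeight, ← (G.edgeSet.toFinite.coe_toFinset), finsum_mem_coe_finset]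
  rfl

end Glue

/-- For a finite pseudometric space `(M, ρ)` and a finite tree
`G` joining `M` in which every vertex of degree 1 is boundary, there exists a
generalized minimal parametric filling of type `G`. -/
theorem exists_gen_min_parametric_filling {V : Type*} [Fintype V] (G : SimpleGraph V)
    (M : Set V) (ρ : V → V → ℝ) (hρ : IsPseudometricOn M ρ) (hG : G.IsTree)
    (hM : ∀ v : V, deg G v = 1 → v ∈ M) :
    ∃ wstar : Sym2 V → ℝ, IsGenFilling G wstar M ρ ∧
      ∀ w : Sym2 V → ℝ, IsGenFilling G w M ρ →
        graphWeight G wstar ≤ graphWeight G w := by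
  classical
  set F0 : Set (Sym2 V → ℝ) :=
    {w | ∀ p ∈ M, ∀ q ∈ M, ∀ γ : G.Walk p q, γ.IsPath → ρ p q ≤ walkWeight w γ} with hF0
  -- F0 is a polyhedron
  have hpoly : IsPoly F0 := by
    set ff : (Σ p : V, Σ q : V, G.Path p q) → ((Sym2 V → ℝ) →ₗ[ℝ] ℝ) := fun i =>
      if i.1 ∈ M ∧ i.2.1 ∈ M then walkWeightL i.2.2.1 else 0 with hff
    set bb : (Σ p : V, Σ q : V, G.Path p q) → ℝ := fun i =>
      if i.1 ∈ M ∧ i.2.1 ∈ M then ρ i.1 i.2.1 else 0 with hbb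
    refine (isPoly_of_fintype ff bb).congr ?_
    ext x
    simp only [Set.mem_setOf_eq, hF0]
    constructor
    · intro h p hp q hq γ hγ
      have := h ⟨p, q, ⟨γ, hγ⟩⟩
      simp only [hff, hbb, if_pos (⟨hp, hq⟩ : p ∈ M ∧ q ∈ M)] at this
      simpa using this
    · intro h i
      rcases i with ⟨p, q, γ⟩
      by_cases hpq : p ∈ M ∧ q ∈ M
      · simp only [hff, hbb, if_pos hpq, walkWeightL_apply]
        exact h p hpq.1 q hpq.2 γ.1 γ.2
      · simp [hff, hbb, if_neg hpq]
  -- F0 is nonempty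
  have hnonempty : F0.Nonempty := by
    set C : ℝ := sSup ({0} ∪ Set.image2 ρ M M) with hC
    have hfinC : ({0} ∪ Set.image2 ρ M M : Set ℝ).Finite :=
      (Set.finite_singleton 0).union (Set.Finite.image2 ρ M.toFinite M.toFinite)
    have hbddC := hfinC.bddAbove
    have hC0 : 0 ≤ C := le_csSup hbddC (Or.inl rfl)
    have hCρ : ∀ p ∈ M, ∀ q ∈ M, ρ p q ≤ C := fun p hp q hq =>
      le_csSup hbddC (Or.inr ⟨p, hp, q, hq, rfl⟩)
    refine ⟨fun _ => C, ?_⟩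
    intro p hp q hq γ hγ
    rcases eq_or_ne p q with rfl | hne
    · have hnil : γ = SimpleGraph.Walk.nil := SimpleGraph.Walk.isPath_iff_eq_nil.1 hγ
      rw [hnil]
      simpa [walkWeight] using (hρ.2.2.1 p hp).le
    · have hlen : 1 ≤ γ.length := by
        have : ¬ γ.Nil := SimpleGraph.Walk.not_nil_of_ne hne
        rw [SimpleGraph.Walk.not_nil_iff_lt_length] at this
        omega
    
      have hval : walkWeight (fun _ => C) γ = γ.length * C := by
        rw [walkWeight]
        have hmap : γ.edges.map (fun _ => C) = List.replicate γ.edges.length C :=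
          List.map_const'
        rw [hmap, List.sum_replicate, SimpleGraph.Walk.length_edges, nsmul_eq_mul]
      rw [hval]
      calc ρ p q ≤ C := hCρ p hp q hq
      _ = 1 * C := (one_mul C).symm
      _ ≤ γ.length * C := by
          apply mul_le_mul_of_nonneg_right _ hC0
          exact_mod_cast hlen
  -- boundedness below
  have hbdd : ∃ c : ℝ, ∀ x ∈ F0, c ≤ gwL G x := by
    refine ⟨0, ?_⟩
    intro x hx
    exact total_nonneg hG hρ hM x hx
  -- apply the LP attainment result
  obtain ⟨wstar, hwstar, hmin⟩ := isPoly_exists_min hpoly hnonempty (gwL G) hbdd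
  refine ⟨wstar, ⟨hG.isConnected, hwstar⟩, ?_⟩
  intro w hw
  rw [graphWeight_eq_gwL, graphWeight_eq_gwL]
  exact hmin w hw.2


end MinFill
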